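/- arXiv:2509.24612 — 2 statements merged into one kernel-verified Lean document; each statement's English description precedes it below -/
import Mathlib

section
/- Fix a real k > −1 and let a < b be consecutive positive zeros of J_{k+1}. Let c ∈ (a,b) satisfy J_k(c) = 0, and suppose c > 2·√((k+1)(k+2)). Then there exist unique d, e ∈ (a,b) with J_{k+2}(d) = 0 and J_{k+3}(e) = 0, and they satisfy a < d < c < e < b. -/
open Real

/-- Bessel function of the first kind of real order `k`, defined by its power series
(valid for `r > 0`, using real powers). -/
noncomputable def besselJ (k r : ℝ) : ℝ :=
  ∑' m : ℕ, ((-1 : ℝ) ^ m / (m.factorial * Real.Gamma (m + k + 1))) * (r / 2) ^ ((2 * m : ℝ) + k)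

open Set

noncomputable def bc (j : ℝ) (m : ℕ) : ℝ :=
  (-1 : ℝ) ^ m / (m.factorial * Real.Gamma (m + j + 1) * (2:ℝ) ^ ((2 * m : ℝ) + j))

noncomputable def bF (j x : ℝ) : ℝ := ∑' m : ℕ, bc j m * x ^ m

lemma gamma_pos (j : ℝ) (hj : -1 < j) (m : ℕ) : 0 < Real.Gamma (m + j + 1) :=
  Real.Gamma_pos_of_pos (by have : (0:ℝ) ≤ m := Nat.cast_nonneg m; linarith)

lemma bc_abs (j : ℝ) (hj : -1 < j) (m : ℕ) :
    |bc j m| = (m.factorial * Real.Gamma (m + j + 1) * (2:ℝ) ^ ((2 * m : ℝ) + j))⁻¹ := by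
  have h1 : (0:ℝ) < m.factorial := by positivity
  have h2 := gamma_pos j hj m
  have h3 : (0:ℝ) < (2:ℝ) ^ ((2 * m : ℝ) + j) := Real.rpow_pos_of_pos (by norm_num) _
  rw [bc, abs_div, abs_pow, abs_neg, abs_one, one_pow, one_div, abs_of_pos (by positivity)]

lemma bc_pos (j : ℝ) (hj : -1 < j) (m : ℕ) : 0 < |bc j m| := by
  rw [bc_abs j hj m]
  have h1 : (0:ℝ) < m.factorial := by positivity
  have h2 := gamma_pos j hj m
  have h3 : (0:ℝ) < (2:ℝ) ^ ((2 * m : ℝ) + j) := Real.rpow_pos_of_pos (by norm_num) _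
  positivity

lemma bc_succ (j : ℝ) (hj : -1 < j) (m : ℕ) :
    bc j (m + 1) = -bc j m / (4 * (m + 1) * (m + j + 1)) := by
  have h2 := gamma_pos j hj m
  have hG : Real.Gamma ((m:ℝ) + 1 + j + 1) = ((m:ℝ) + j + 1) * Real.Gamma (m + j + 1) := by
    have : (m:ℝ) + 1 + j + 1 = ((m:ℝ) + j + 1) + 1 := by ring
    rw [this, Real.Gamma_add_one (by linarith)]
  have hP : (2:ℝ) ^ ((2 * ((m:ℕ)+1) : ℝ) + j) = 4 * (2:ℝ) ^ ((2 * m : ℝ) + j) := by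
    have : ((2 * ((m:ℕ)+1) : ℝ) + j) = ((2 * m : ℝ) + j) + 2 := by push_cast; ring
    rw [this, Real.rpow_add (by norm_num), Real.rpow_two]; ring
  have hF : (((m:ℕ)+1).factorial : ℝ) = ((m:ℝ) + 1) * m.factorial := by
    rw [Nat.factorial_succ]; push_cast; ring
  rw [bc, bc]
  push_cast [hG, hP, hF]
  have h1 : (0:ℝ) < m.factorial := by positivity
  have h3 : (0:ℝ) < (2:ℝ) ^ ((2 * m : ℝ) + j) := Real.rpow_pos_of_pos (by norm_num) _
  have h4 : (0:ℝ) < (m:ℝ) + 1 := by positivity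
  have h5 : (0:ℝ) < (m:ℝ) + j + 1 := by linarith
  field_simp
  ring

lemma u_summable (j : ℝ) (hj : -1 < j) (R : ℝ) (hR : 1 ≤ R) :
    Summable (fun m : ℕ => |bc j m| * (m + 1) * R ^ m) := by
  obtain ⟨N, hN⟩ := exists_nat_ge R
  apply summable_of_ratio_norm_eventually_le (r := 1/2) (by norm_num)
  filter_upwards [Filter.eventually_ge_atTop (N + 1)] with m hm
  have hm1 : (1:ℝ) ≤ m := by
    have : (1:ℕ) ≤ m := le_trans (Nat.le_add_left 1 N) hm
    exact_mod_cast this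
  have hRm : R ≤ m := le_trans hN (by exact_mod_cast le_trans (Nat.le_succ N) hm)
  have hj2 : (1:ℝ) ≤ (m:ℝ) + j + 1 := by linarith
  have h4 : (0:ℝ) < 4 * ((m:ℝ) + 1) * ((m:ℝ) + j + 1) := by positivity
  have hbb : |bc j (m+1)| = |bc j m| / (4 * ((m:ℝ) + 1) * ((m:ℝ) + j + 1)) := by
    rw [bc_succ j hj m, abs_div, abs_neg, abs_of_pos h4]
  have hRp : (0:ℝ) < R := lt_of_lt_of_le one_pos hR
  have hb : (0:ℝ) ≤ |bc j m| := abs_nonneg _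
  have hRpow : (0:ℝ) < R ^ m := by positivity
  simp only [norm_mul, norm_pow, Real.norm_eq_abs, abs_abs]
  push_cast
  rw [abs_of_pos (by positivity : (0:ℝ) < (m:ℝ)+1+1),
      abs_of_pos (by positivity : (0:ℝ) < (m:ℝ)+1), abs_of_pos hRp, hbb,
      div_mul_eq_mul_div, div_mul_eq_mul_div, div_le_iff₀ h4, pow_succ]
  have key : R * ((m:ℝ)+2) ≤ 2 * (((m:ℝ)+1) * ((m:ℝ)+1)) * ((m:ℝ)+j+1) := by
    nlinarith
  have h2 := mul_le_mul_of_nonneg_left key (mul_nonneg hb hRpow.le)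
  nlinarith

lemma term_bound (j : ℝ) (hj : -1 < j) (x : ℝ) (R : ℝ) (hR : 1 ≤ R) (hx : |x| ≤ R) (m : ℕ) :
    ‖bc j m * x ^ m‖ ≤ |bc j m| * (m + 1) * R ^ m := by
  have hRp : (0:ℝ) < R := lt_of_lt_of_le one_pos hR
  rw [norm_mul, norm_pow, Real.norm_eq_abs, Real.norm_eq_abs]
  have h1 : |x| ^ m ≤ R ^ m := pow_le_pow_left₀ (abs_nonneg x) hx m
  have h2 : |x| ^ m ≤ ((m:ℝ) + 1) * R ^ m := by nlinarith [pow_pos hRp m, Nat.cast_nonneg (α := ℝ) m]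
  calc |bc j m| * |x| ^ m ≤ |bc j m| * (((m:ℝ)+1) * R ^ m) :=
        mul_le_mul_of_nonneg_left h2 (abs_nonneg _)
    _ = |bc j m| * ((m:ℝ)+1) * R ^ m := by ring

lemma deriv_term_bound (j : ℝ) (hj : -1 < j) (x : ℝ) (R : ℝ) (hR : 1 ≤ R) (hx : |x| ≤ R) (m : ℕ) :
    ‖bc j m * ((m : ℝ) * x ^ (m - 1))‖ ≤ |bc j m| * (m + 1) * R ^ m := by
  have hRp : (0:ℝ) < R := lt_of_lt_of_le one_pos hR
  rw [norm_mul, Real.norm_eq_abs, Real.norm_eq_abs, abs_mul, abs_pow, Nat.abs_cast]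
  have h1 : |x| ^ (m-1) ≤ R ^ (m-1) := pow_le_pow_left₀ (abs_nonneg x) hx _
  have h2 : R ^ (m-1) ≤ R ^ m := pow_le_pow_right₀ hR (Nat.sub_le m 1)
  have h4 : (0:ℝ) ≤ (m:ℝ) := Nat.cast_nonneg m
  have h5 : (0:ℝ) < R ^ m := pow_pos hRp m
  have h6 : (m:ℝ) * |x| ^ (m-1) ≤ ((m:ℝ)+1) * R ^ m := by
    have : (m:ℝ) * |x| ^ (m-1) ≤ (m:ℝ) * R ^ m :=
      mul_le_mul_of_nonneg_left (le_trans h1 h2) h4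
    nlinarith
  calc |bc j m| * ((m:ℝ) * |x| ^ (m-1)) ≤ |bc j m| * (((m:ℝ)+1) * R ^ m) :=
        mul_le_mul_of_nonneg_left h6 (abs_nonneg _)
    _ = |bc j m| * ((m:ℝ)+1) * R ^ m := by ring

lemma summable_terms (j : ℝ) (hj : -1 < j) (x : ℝ) :
    Summable (fun m : ℕ => bc j m * x ^ m) := by
  apply Summable.of_norm_bounded (u_summable j hj (|x|+1) (le_add_of_nonneg_left (abs_nonneg x)))
  exact term_bound j hj x _ (le_add_of_nonneg_left (abs_nonneg x)) (by linarith)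

lemma summable_deriv_terms (j : ℝ) (hj : -1 < j) (x : ℝ) :
    Summable (fun m : ℕ => bc j m * ((m : ℝ) * x ^ (m - 1))) := by
  apply Summable.of_norm_bounded (u_summable j hj (|x|+1) (le_add_of_nonneg_left (abs_nonneg x)))
  exact deriv_term_bound j hj x _ (le_add_of_nonneg_left (abs_nonneg x)) (by linarith)

lemma deriv_shift (j : ℝ) (hj : -1 < j) (x : ℝ) :
    (∑' m : ℕ, bc j m * ((m : ℝ) * x ^ (m - 1))) = -(1/2) * bF (j+1) x := by
  rw [Summable.tsum_eq_zero_add (summable_deriv_terms j hj x)]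
  simp only [Nat.cast_zero, zero_mul, mul_zero, zero_add]
  have hterm : ∀ m : ℕ, bc j (m+1) * (((m:ℝ) + 1) * x ^ m) = -(1/2) * (bc (j+1) m * x ^ m) := by
    intro m
    have h := bc_succ j hj m
    have hG : Real.Gamma ((m:ℝ) + (j+1) + 1) = ((m:ℝ) + j + 1) * Real.Gamma ((m:ℝ) + j + 1) := by
      have he : (m:ℝ) + (j+1) + 1 = ((m:ℝ) + j + 1) + 1 := by ring
      rw [he, Real.Gamma_add_one (by have := Nat.cast_nonneg (α := ℝ) m; linarith)]
    have hP : (2:ℝ) ^ ((2 * m : ℝ) + (j+1)) = 2 * (2:ℝ) ^ ((2 * m : ℝ) + j) := by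
      have he : ((2 * m : ℝ) + (j+1)) = ((2 * m : ℝ) + j) + 1 := by ring
      rw [he, Real.rpow_add_one (by norm_num)]; ring
    rw [h]
    have h1 : (0:ℝ) < m.factorial := by positivity
    have h2 : (0:ℝ) < Real.Gamma ((m:ℝ) + j + 1) :=
      Real.Gamma_pos_of_pos (by have := Nat.cast_nonneg (α := ℝ) m; linarith)
    have h3 : (0:ℝ) < (2:ℝ) ^ ((2 * m : ℝ) + j) := Real.rpow_pos_of_pos (by norm_num) _
    have h4 : (0:ℝ) < (m:ℝ) + 1 := by positivity
    have h5 : (0:ℝ) < (m:ℝ) + j + 1 := by linarith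
    simp only [bc]
    rw [hG, hP]
    field_simp
    ring
  calc (∑' m : ℕ, bc j (m+1) * ((↑(m+1) : ℝ) * x ^ m))
      = ∑' m : ℕ, -(1/2) * (bc (j+1) m * x ^ m) := by
        apply tsum_congr; intro m
        have : ((↑(m+1) : ℝ)) = (m:ℝ) + 1 := by push_cast; ring
        rw [this, hterm m]
    _ = -(1/2) * bF (j+1) x := by rw [tsum_mul_left]; rfl

lemma hasDerivAt_bF (j : ℝ) (hj : -1 < j) (x : ℝ) :
    HasDerivAt (bF j) (-(1/2) * bF (j+1) x) x := by
  rw [← deriv_shift j hj x]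
  have hbF : bF j = fun y : ℝ => ∑' m : ℕ, bc j m * y ^ m := rfl
  rw [hbF]
  set R := |x| + 1 with hRdef
  have hR : 1 ≤ R := le_add_of_nonneg_left (abs_nonneg x)
  have hRp : (0:ℝ) < R := lt_of_lt_of_le one_pos hR
  refine hasDerivAt_tsum_of_isPreconnected (u_summable j hj R hR) (isOpen_Ioo (a := -R) (b := R))
      ((convex_Ioo _ _).isPreconnected) (y₀ := 0)
      (g' := fun m y => bc j m * ((m : ℝ) * y ^ (m - 1))) ?_ ?_ ?_ ?_ ?_
  · intro m y _
    exact (hasDerivAt_pow m y).const_mul (bc j m)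
  · intro m y hy
    have : |y| ≤ R := by rw [abs_le]; exact ⟨hy.1.le, hy.2.le⟩
    exact deriv_term_bound j hj y R hR this m
  · exact Set.mem_Ioo.mpr ⟨by linarith, by linarith⟩
  · apply summable_of_ne_finset_zero (s := {0})
    intro m hm
    have hm0 : m ≠ 0 := by simpa using hm
    simp [zero_pow hm0]
  · exact Set.mem_Ioo.mpr ⟨by linarith [neg_abs_le x], by linarith [le_abs_self x]⟩

lemma bF_rec (j : ℝ) (hj : 0 < j) (x : ℝ) :
    bF (j-1) x = 2*j*bF j x - x * bF (j+1) x := by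
  have hj1 : -1 < j := by linarith
  have hj2 : -1 < j - 1 := by linarith
  have hcoef : ∀ m : ℕ, bc (j-1) m = 2*((m:ℝ)+j) * bc j m := by
    intro m
    have hm : (0:ℝ) ≤ (m:ℝ) := Nat.cast_nonneg m
    have hG1 : (m:ℝ) + (j-1) + 1 = (m:ℝ) + j := by ring
    have hG2 : Real.Gamma ((m:ℝ) + j + 1) = ((m:ℝ) + j) * Real.Gamma ((m:ℝ) + j) :=
      Real.Gamma_add_one (by linarith)
    have hP : (2:ℝ) ^ ((2 * m : ℝ) + j) = (2:ℝ) ^ ((2 * m : ℝ) + (j-1)) * 2 := by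
      rw [← Real.rpow_add_one (by norm_num : (2:ℝ) ≠ 0)]; ring_nf
    have h1 : (0:ℝ) < m.factorial := by positivity
    have h2 : (0:ℝ) < Real.Gamma ((m:ℝ) + j) :=
      Real.Gamma_pos_of_pos (by linarith)
    have h3 : (0:ℝ) < (2:ℝ) ^ ((2 * m : ℝ) + (j-1)) := Real.rpow_pos_of_pos (by norm_num) _
    have h5 : (0:ℝ) < (m:ℝ) + j := by linarith
    simp only [bc, hG1, hG2, hP]
    field_simp
  have hterm : ∀ m : ℕ, bc (j-1) m * x ^ m
      = 2*j*(bc j m * x ^ m) + 2*x*(bc j m * ((m:ℝ) * x ^ (m-1))) := by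
    intro m
    have hx : x * ((m:ℝ) * x ^ (m-1)) = (m:ℝ) * x ^ m := by
      cases m with
      | zero => simp
      | succ n => simp only [Nat.add_sub_cancel]; push_cast; rw [pow_succ]; ring
    rw [hcoef m]
    linear_combination (-2 * bc j m) * hx
  calc bF (j-1) x = ∑' m : ℕ, (2*j*(bc j m * x ^ m) + 2*x*(bc j m * ((m:ℝ) * x ^ (m-1)))) :=
        tsum_congr hterm
    _ = (∑' m : ℕ, 2*j*(bc j m * x ^ m)) + ∑' m : ℕ, 2*x*(bc j m * ((m:ℝ) * x ^ (m-1))) :=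
        Summable.tsum_add ((summable_terms j hj1 x).mul_left _) ((summable_deriv_terms j hj1 x).mul_left _)
    _ = 2*j*bF j x + 2*x*(∑' m : ℕ, bc j m * ((m:ℝ) * x ^ (m-1))) := by
        rw [tsum_mul_left, tsum_mul_left]; rfl
    _ = 2*j*bF j x - x * bF (j+1) x := by rw [deriv_shift j hj1 x]; ring

lemma besselJ_eq (j r : ℝ) (hj : -1 < j) (hr : 0 < r) : besselJ j r = r ^ j * bF j (r^2) := by
  have hterm : ∀ m : ℕ, ((-1 : ℝ) ^ m / (m.factorial * Real.Gamma (m + j + 1)))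
      * (r / 2) ^ ((2 * m : ℝ) + j) = (bc j m * (r^2) ^ m) * r ^ j := by
    intro m
    have h1 : (r / 2) ^ ((2 * m : ℝ) + j) = r ^ ((2 * m : ℝ) + j) / (2:ℝ) ^ ((2 * m : ℝ) + j) :=
      Real.div_rpow hr.le (by norm_num) _
    have h2 : r ^ ((2 * m : ℝ) + j) = r ^ ((2 * m : ℝ)) * r ^ j := Real.rpow_add hr _ _
    have h3 : r ^ ((2 * m : ℝ)) = (r^2) ^ m := by
      have : ((2 * m : ℝ)) = (((2 * m : ℕ) : ℝ)) := by push_cast; ring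
      rw [this, Real.rpow_natCast, pow_mul]
    have h4 : (0:ℝ) < (2:ℝ) ^ ((2 * m : ℝ) + j) := Real.rpow_pos_of_pos (by norm_num) _
    rw [h1, h2, h3, bc]
    field_simp
  rw [besselJ]
  calc (∑' m : ℕ, ((-1 : ℝ) ^ m / (m.factorial * Real.Gamma (m + j + 1)))
      * (r / 2) ^ ((2 * m : ℝ) + j))
      = ∑' m : ℕ, (bc j m * (r^2) ^ m) * r ^ j := tsum_congr hterm
    _ = (∑' m : ℕ, bc j m * (r^2) ^ m) * r ^ j := tsum_mul_right
    _ = r ^ j * bF j (r^2) := by rw [bF, mul_comm]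

lemma gcont {g gn : ℝ → ℝ} (hd : ∀ r, HasDerivAt g (-(r * gn r)) r) : Continuous g :=
  continuous_iff_continuousAt.mpr fun r => (hd r).continuousAt

lemma rolleG (j : ℝ) (g gn gp : ℝ → ℝ)
    (hg : ∀ r : ℝ, HasDerivAt g (-(r * gn r)) r)
    (hrec : ∀ r : ℝ, gp r = 2*j*g r - r^2 * gn r)
    {x y : ℝ} (hx : 0 < x) (hxy : x < y) (hgx : g x = 0) (hgy : g y = 0) :
    ∃ ξ ∈ Set.Ioo x y, gp ξ = 0 := by
  have hder : ∀ r : ℝ, 0 < r →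
      HasDerivAt (fun s : ℝ => s ^ (2*j) * g s) (r ^ (2*j - 1) * gp r) r := by
    intro r hr
    have h1 : HasDerivAt (fun s : ℝ => s ^ (2*j)) ((2*j) * r ^ (2*j - 1)) r :=
      Real.hasDerivAt_rpow_const (Or.inl hr.ne')
    have h2 := h1.mul (hg r)
    refine h2.congr_deriv ?_
    have hpow : r ^ (2*j) = r ^ (2*j-1) * r := by
      rw [← Real.rpow_add_one hr.ne' (2*j-1)]; ring_nf
    rw [hrec r, hpow]; ring
  have hcont : ContinuousOn (fun s : ℝ => s ^ (2*j) * g s) (Set.Icc x y) := fun z hz =>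
    ((hder z (lt_of_lt_of_le hx hz.1)).continuousAt.continuousWithinAt)
  have hwx : x ^ (2*j) * g x = y ^ (2*j) * g y := by rw [hgx, hgy]; ring
  obtain ⟨ξ, hξ, hξ0⟩ := exists_hasDerivAt_eq_zero hxy hcont hwx
    (fun z hz => hder z (lt_trans hx hz.1))
  refine ⟨ξ, hξ, ?_⟩
  have hpos : 0 < ξ ^ (2*j-1) := Real.rpow_pos_of_pos (lt_trans hx hξ.1) _
  rcases mul_eq_zero.mp hξ0 with h | h
  · exact absurd h hpos.ne'
  · exact h

lemma wltG (j : ℝ) (g gn gp : ℝ → ℝ)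
    (hg : ∀ r : ℝ, HasDerivAt g (-(r * gn r)) r)
    (hrec : ∀ r : ℝ, gp r = 2*j*g r - r^2 * gn r)
    {x y : ℝ} (hx : 0 < x) (hxy : x < y)
    (hneg : ∀ r ∈ Set.Ioo x y, gp r < 0) :
    y ^ (2*j) * g y < x ^ (2*j) * g x := by
  have hder : ∀ r : ℝ, 0 < r →
      HasDerivAt (fun s : ℝ => s ^ (2*j) * g s) (r ^ (2*j - 1) * gp r) r := by
    intro r hr
    have h1 : HasDerivAt (fun s : ℝ => s ^ (2*j)) ((2*j) * r ^ (2*j - 1)) r :=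
      Real.hasDerivAt_rpow_const (Or.inl hr.ne')
    have h2 := h1.mul (hg r)
    refine h2.congr_deriv ?_
    have hpow : r ^ (2*j) = r ^ (2*j-1) * r := by
      rw [← Real.rpow_add_one hr.ne' (2*j-1)]; ring_nf
    rw [hrec r, hpow]; ring
  have hanti : StrictAntiOn (fun s : ℝ => s ^ (2*j) * g s) (Set.Icc x y) := by
    apply strictAntiOn_of_deriv_neg (convex_Icc x y)
    · exact fun z hz => ((hder z (lt_of_lt_of_le hx hz.1)).continuousAt.continuousWithinAt)
    · intro z hz
      rw [interior_Icc] at hz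
      have hz0 : 0 < z := lt_trans hx hz.1
      rw [(hder z hz0).deriv]
      have := hneg z hz
      have := Real.rpow_pos_of_pos hz0 (2*j-1)
      nlinarith
  exact hanti (Set.left_mem_Icc.mpr hxy.le) (Set.right_mem_Icc.mpr hxy.le) hxy

lemma wgtG (j : ℝ) (g gn gp : ℝ → ℝ)
    (hg : ∀ r : ℝ, HasDerivAt g (-(r * gn r)) r)
    (hrec : ∀ r : ℝ, gp r = 2*j*g r - r^2 * gn r)
    {x y : ℝ} (hx : 0 < x) (hxy : x < y)
    (hpos : ∀ r ∈ Set.Ioo x y, 0 < gp r) :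
    x ^ (2*j) * g x < y ^ (2*j) * g y := by
  have hder : ∀ r : ℝ, 0 < r →
      HasDerivAt (fun s : ℝ => s ^ (2*j) * g s) (r ^ (2*j - 1) * gp r) r := by
    intro r hr
    have h1 : HasDerivAt (fun s : ℝ => s ^ (2*j)) ((2*j) * r ^ (2*j - 1)) r :=
      Real.hasDerivAt_rpow_const (Or.inl hr.ne')
    have h2 := h1.mul (hg r)
    refine h2.congr_deriv ?_
    have hpow : r ^ (2*j) = r ^ (2*j-1) * r := by
      rw [← Real.rpow_add_one hr.ne' (2*j-1)]; ring_nf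
    rw [hrec r, hpow]; ring
  have hmono : StrictMonoOn (fun s : ℝ => s ^ (2*j) * g s) (Set.Icc x y) := by
    apply strictMonoOn_of_deriv_pos (convex_Icc x y)
    · exact fun z hz => ((hder z (lt_of_lt_of_le hx hz.1)).continuousAt.continuousWithinAt)
    · intro z hz
      rw [interior_Icc] at hz
      have hz0 : 0 < z := lt_trans hx hz.1
      rw [(hder z hz0).deriv]
      have := hpos z hz
      have := Real.rpow_pos_of_pos hz0 (2*j-1)
      nlinarith
  exact hmono (Set.left_mem_Icc.mpr hxy.le) (Set.right_mem_Icc.mpr hxy.le) hxy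

lemma glt (g gn : ℝ → ℝ) (hg : ∀ r : ℝ, HasDerivAt g (-(r * gn r)) r)
    {x y : ℝ} (hx : 0 < x) (hxy : x < y)
    (hpos : ∀ r ∈ Set.Ioo x y, 0 < gn r) : g y < g x := by
  have hanti : StrictAntiOn g (Set.Icc x y) := by
    apply strictAntiOn_of_deriv_neg (convex_Icc x y) (gcont hg).continuousOn
    intro z hz
    rw [interior_Icc] at hz
    rw [(hg z).deriv]
    have hz0 : 0 < z := lt_trans hx hz.1
    nlinarith [hpos z hz]
  exact hanti (Set.left_mem_Icc.mpr hxy.le) (Set.right_mem_Icc.mpr hxy.le) hxy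

lemma ggt (g gn : ℝ → ℝ) (hg : ∀ r : ℝ, HasDerivAt g (-(r * gn r)) r)
    {x y : ℝ} (hx : 0 < x) (hxy : x < y)
    (hneg : ∀ r ∈ Set.Ioo x y, gn r < 0) : g x < g y := by
  have hmono : StrictMonoOn g (Set.Icc x y) := by
    apply strictMonoOn_of_deriv_pos (convex_Icc x y) (gcont hg).continuousOn
    intro z hz
    rw [interior_Icc] at hz
    rw [(hg z).deriv]
    have hz0 : 0 < z := lt_trans hx hz.1
    nlinarith [hneg z hz]
  exact hmono (Set.left_mem_Icc.mpr hxy.le) (Set.right_mem_Icc.mpr hxy.le) hxy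

lemma ivt_zero {f : ℝ → ℝ} (hf : Continuous f) {x y : ℝ} (hxy : x < y)
    (h1 : f x < 0) (h2 : 0 < f y) : ∃ z ∈ Set.Ioo x y, f z = 0 := by
  have := intermediate_value_Ioo hxy.le hf.continuousOn (a := x) (b := y)
  obtain ⟨z, hz, hz0⟩ := this (Set.mem_Ioo.mpr ⟨h1, h2⟩)
  exact ⟨z, hz, hz0⟩

lemma ivt_zero' {f : ℝ → ℝ} (hf : Continuous f) {x y : ℝ} (hxy : x < y)
    (h1 : 0 < f x) (h2 : f y < 0) : ∃ z ∈ Set.Ioo x y, f z = 0 := by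
  have := intermediate_value_Ioo' hxy.le hf.continuousOn (a := x) (b := y)
  obtain ⟨z, hz, hz0⟩ := this (Set.mem_Ioo.mpr ⟨h2, h1⟩)
  exact ⟨z, hz, hz0⟩

lemma all_neg {f : ℝ → ℝ} (hf : Continuous f) {x y : ℝ}
    (hnz : ∀ z ∈ Set.Ioo x y, f z ≠ 0) {r1 : ℝ} (hr1 : r1 ∈ Set.Ioo x y) (hneg : f r1 < 0) :
    ∀ z ∈ Set.Ioo x y, f z < 0 := by
  intro z hz
  rcases lt_trichotomy (f z) 0 with h | h | h
  · exact h
  · exact absurd h (hnz z hz)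
  · exfalso
    rcases lt_trichotomy z r1 with hzr | hzr | hzr
    · obtain ⟨w, hw, hw0⟩ := ivt_zero' hf hzr h hneg
      exact hnz w ⟨lt_trans hz.1 hw.1, lt_trans hw.2 hr1.2⟩ hw0
    · rw [hzr] at h; linarith
    · obtain ⟨w, hw, hw0⟩ := ivt_zero hf hzr hneg h
      exact hnz w ⟨lt_trans hr1.1 hw.1, lt_trans hw.2 hz.2⟩ hw0

lemma all_pos {f : ℝ → ℝ} (hf : Continuous f) {x y : ℝ}
    (hnz : ∀ z ∈ Set.Ioo x y, f z ≠ 0) {r1 : ℝ} (hr1 : r1 ∈ Set.Ioo x y) (hpos : 0 < f r1) :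
    ∀ z ∈ Set.Ioo x y, 0 < f z := by
  intro z hz
  have h1 : (fun s => -f s) r1 < 0 := by simp only []; linarith
  have := all_neg (f := fun s => -f s) (hf.neg)
    (fun w hw h => hnz w hw (by simpa using neg_eq_zero.mp (by simpa using h)))
    hr1 h1 z hz
  linarith

lemma factor_zero {x v : ℝ} (hx : 0 < x) (h : -(x * v) = 0) : v = 0 := by
  rcases mul_eq_zero.mp (neg_eq_zero.mp h) with h' | h'
  · exact absurd h' hx.ne'
  · exact h'


theorem key (k a b c : ℝ) (g0 g1 g2 g3 g4 : ℝ → ℝ)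
    (hk : -1 < k) (ha : 0 < a) (hab : a < b)
    (hd0 : ∀ r, HasDerivAt g0 (-(r * g1 r)) r)
    (hd1 : ∀ r, HasDerivAt g1 (-(r * g2 r)) r)
    (hd2 : ∀ r, HasDerivAt g2 (-(r * g3 r)) r)
    (hd3 : ∀ r, HasDerivAt g3 (-(r * g4 r)) r)
    (hr1 : ∀ r, g0 r = 2*(k+1) * g1 r - r^2 * g2 r)
    (hr2 : ∀ r, g1 r = 2*(k+2) * g2 r - r^2 * g3 r)
    (hr3 : ∀ r, g2 r = 2*(k+3) * g3 r - r^2 * g4 r)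
    (h1a : g1 a = 0) (h1b : g1 b = 0)
    (h1pos : ∀ r ∈ Set.Ioo a b, 0 < g1 r)
    (hc : c ∈ Set.Ioo a b) (h0c : g0 c = 0)
    (hcr : 4*(k+1)*(k+2) < c^2) :
    (∃! d, d ∈ Set.Ioo a b ∧ g2 d = 0) ∧ (∃! e, e ∈ Set.Ioo a b ∧ g3 e = 0) ∧
    ∀ d e, d ∈ Set.Ioo a b → g2 d = 0 → e ∈ Set.Ioo a b → g3 e = 0 →
      a < d ∧ d < c ∧ c < e ∧ e < b := by
  have hc0 : Continuous g0 := gcont hd0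
  have hc1 : Continuous g1 := gcont hd1
  have hc2 : Continuous g2 := gcont hd2
  have hc3 : Continuous g3 := gcont hd3
  have hca : a < c := hc.1
  have hcb : c < b := hc.2
  have hcpos : 0 < c := lt_trans ha hca
  have hbpos : 0 < b := lt_trans hcpos hcb
  have h1c : 0 < g1 c := h1pos c hc
  -- g0 has no zero in (a,b) other than c
  have hg0z : ∀ z ∈ Set.Ioo a b, g0 z = 0 → z = c := by
    intro z hz h0
    by_contra hne
    rcases lt_or_gt_of_ne hne with h | h
    · obtain ⟨ξ, hξ, hξ0⟩ := exists_hasDerivAt_eq_zero h hc0.continuousOn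
        (h0.trans h0c.symm) (fun r _ => hd0 r)
      have hξab : ξ ∈ Set.Ioo a b := ⟨lt_trans hz.1 hξ.1, lt_trans hξ.2 hcb⟩
      have hξpos : 0 < ξ := lt_trans ha hξab.1
      have : g1 ξ = 0 := factor_zero hξpos hξ0
      exact absurd this (h1pos ξ hξab).ne'
    · obtain ⟨ξ, hξ, hξ0⟩ := exists_hasDerivAt_eq_zero h hc0.continuousOn
        (h0c.trans h0.symm) (fun r _ => hd0 r)
      have hξab : ξ ∈ Set.Ioo a b := ⟨lt_trans hca hξ.1, lt_trans hξ.2 hz.2⟩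
      have hξpos : 0 < ξ := lt_trans ha hξab.1
      have : g1 ξ = 0 := factor_zero hξpos hξ0
      exact absurd this (h1pos ξ hξab).ne'
  -- between two zeros of g2 (resp. g3) there is a zero of g1 (resp. g2)
  have hg2pair : ∀ x y : ℝ, 0 < x → x < y → g2 x = 0 → g2 y = 0 →
      ∃ ξ ∈ Set.Ioo x y, g1 ξ = 0 := fun x y hx hxy h1 h2 =>
    rolleG (k+2) g2 g3 g1 hd2 hr2 hx hxy h1 h2
  have hg3pair : ∀ x y : ℝ, 0 < x → x < y → g3 x = 0 → g3 y = 0 →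
      ∃ ξ ∈ Set.Ioo x y, g2 ξ = 0 := fun x y hx hxy h1 h2 =>
    rolleG (k+3) g3 g4 g2 hd3 hr3 hx hxy h1 h2
  -- uniqueness of zeros of g2 in (a,b)
  have huniq2 : ∀ z1 ∈ Set.Ioo a b, ∀ z2 ∈ Set.Ioo a b, g2 z1 = 0 → g2 z2 = 0 → z1 = z2 := by
    intro z1 hz1 z2 hz2 h1 h2
    by_contra hne
    rcases lt_or_gt_of_ne hne with h | h
    · obtain ⟨ξ, hξ, hξ0⟩ := hg2pair z1 z2 (lt_trans ha hz1.1) h h1 h2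
      exact absurd hξ0 (h1pos ξ ⟨lt_trans hz1.1 hξ.1, lt_trans hξ.2 hz2.2⟩).ne'
    · obtain ⟨ξ, hξ, hξ0⟩ := hg2pair z2 z1 (lt_trans ha hz2.1) h h2 h1
      exact absurd hξ0 (h1pos ξ ⟨lt_trans hz2.1 hξ.1, lt_trans hξ.2 hz1.2⟩).ne'
  -- existence of a zero d of g2
  obtain ⟨d, hd, hd0'⟩ := exists_hasDerivAt_eq_zero hab hc1.continuousOn
    (h1a.trans h1b.symm) (fun r _ => hd1 r)
  have hdpos : 0 < d := lt_trans ha hd.1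
  have h2d : g2 d = 0 := factor_zero hdpos hd0'
  -- signs of g0
  have h0ac : ∀ r, a < r → r < c → 0 < g0 r := by
    intro r har hrc
    rcases lt_trichotomy (g0 r) 0 with h | h | h
    · exfalso
      have hnz : ∀ z ∈ Set.Ioo a c, g0 z ≠ 0 := by
        intro z hz h0
        have : z = c := hg0z z ⟨hz.1, lt_trans hz.2 hcb⟩ h0
        exact absurd this hz.2.ne
      have hneg := all_neg hc0 hnz ⟨har, hrc⟩ h
      have := wltG (k+1) g1 g2 g0 hd1 hr1 ha hca hneg
      rw [h1a] at this
      have h1 : (0:ℝ) < c ^ (2*(k+1)) := Real.rpow_pos_of_pos hcpos _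
      nlinarith
    · exact absurd (hg0z r ⟨har, lt_trans hrc hcb⟩ h) hrc.ne
    · exact h
  have h0cb : ∀ r, c < r → r < b → g0 r < 0 := by
    intro r hcr' hrb
    rcases lt_trichotomy (g0 r) 0 with h | h | h
    · exact h
    · exact absurd (hg0z r ⟨lt_trans hca hcr', hrb⟩ h) hcr'.ne'
    · exfalso
      have hnz : ∀ z ∈ Set.Ioo c b, g0 z ≠ 0 := by
        intro z hz h0
        have : z = c := hg0z z ⟨lt_trans hca hz.1, hz.2⟩ h0
        exact absurd this hz.1.ne'
      have hpos := all_pos hc0 hnz ⟨hcr', hrb⟩ h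
      have := wgtG (k+1) g1 g2 g0 hd1 hr1 hcpos hcb hpos
      rw [h1b] at this
      have h1 : (0:ℝ) < c ^ (2*(k+1)) := Real.rpow_pos_of_pos hcpos _
      nlinarith
  -- g2 c > 0
  have h2c : 0 < g2 c := by
    have e1 := hr1 c
    rw [h0c] at e1
    nlinarith [sq_nonneg c]
  -- g2 > 0 on [c,b)
  have h2cb : ∀ r, c ≤ r → r < b → 0 < g2 r := by
    intro r hcr' hrb
    rcases eq_or_lt_of_le hcr' with h | h
    · rw [← h]; exact h2c
    · have e1 := hr1 r
      have h0 := h0cb r h hrb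
      have h1 := h1pos r ⟨lt_trans hca h, hrb⟩
      have hrpos : 0 < r := lt_trans hcpos h
      nlinarith
  -- d < c
  have hdc : d < c := by
    by_contra hge
    push_neg at hge
    exact absurd h2d (h2cb d hge hd.2).ne'
  -- g2 < 0 on (a,d)
  have h2ad : ∀ r, a < r → r < d → g2 r < 0 := by
    intro r har hrd
    have hrab : r ∈ Set.Ioo a b := ⟨har, lt_trans hrd hd.2⟩
    rcases lt_trichotomy (g2 r) 0 with h | h | h
    · exact h
    · exact absurd (huniq2 r hrab d hd h h2d) hrd.ne
    · exfalso
      have hnz : ∀ z ∈ Set.Ioo a d, g2 z ≠ 0 := by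
        intro z hz h0
        exact absurd (huniq2 z ⟨hz.1, lt_trans hz.2 hd.2⟩ d hd h0 h2d) hz.2.ne
      have hpos := all_pos hc2 hnz ⟨har, hrd⟩ h
      have := glt g1 g2 hd1 ha hd.1 hpos
      rw [h1a] at this
      exact absurd this (not_lt.mpr (h1pos d hd).le)
  -- g2 > 0 on (d,b)
  have h2db : ∀ r, d < r → r < b → 0 < g2 r := by
    intro r hdr hrb
    have hnz : ∀ z ∈ Set.Ioo d b, g2 z ≠ 0 := by
      intro z hz h0
      exact absurd (huniq2 z ⟨lt_trans hd.1 hz.1, hz.2⟩ d hd h0 h2d) hz.1.ne'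
    exact all_pos hc2 hnz ⟨hdc, hcb⟩ h2c r ⟨hdr, hrb⟩
  -- g3 c < 0
  have h3c : g3 c < 0 := by
    have e1 := hr1 c
    rw [h0c] at e1
    have e2 := hr2 c
    have hc4 : 0 < c^2 := by positivity
    have key1 : c^2*(c^2*g3 c) = (4*(k+1)*(k+2) - c^2)*g1 c := by
      linear_combination (c^2) * e2 + 2*(k+2)*e1
    nlinarith [mul_pos hc4 hc4]
  -- g3 d < 0
  have h3d : g3 d < 0 := by
    have e2 := hr2 d
    rw [h2d] at e2
    have h1 := h1pos d hd
    nlinarith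
  -- no point in (d,c) with g3 > 0
  have hclaim : ¬ ∃ z, d < z ∧ z < c ∧ 0 < g3 z := by
    rintro ⟨z, hdz, hzc, hz3⟩
    obtain ⟨e1, he1, he10⟩ := ivt_zero hc3 hdz h3d hz3
    obtain ⟨e2, he2, he20⟩ := ivt_zero' hc3 hzc hz3 h3c
    obtain ⟨ξ, hξ, hξ0⟩ := hg3pair e1 e2 (lt_trans hdpos he1.1)
      (lt_trans he1.2 he2.1) he10 he20
    have : 0 < g2 ξ := h2db ξ (lt_trans he1.1 hξ.1)
      (lt_trans (lt_trans hξ.2 he2.2) hcb)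
    exact absurd hξ0 this.ne'
  -- g3 < 0 on (a,c]
  have h3ac : ∀ r, a < r → r ≤ c → g3 r < 0 := by
    intro r har hrc
    rcases le_or_gt r d with h | h
    · rcases eq_or_lt_of_le h with h' | h'
      · rw [h']; exact h3d
      · have e2 := hr2 r
        have h2 := h2ad r har h'
        have h1 := h1pos r ⟨har, lt_trans h' hd.2⟩
        nlinarith
    · rcases eq_or_lt_of_le hrc with h' | h'
      · rw [h']; exact h3c
      · rcases lt_trichotomy (g3 r) 0 with h3 | h3 | h3
        · exact h3
        · exfalso
          -- g3 r = 0, derivative positive, find point to the right with g3 > 0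
          have h2r : 0 < g2 r := h2db r h (lt_trans h' hcb)
          have hrpos : 0 < r := lt_trans ha har
          have h4r : g4 r < 0 := by
            have e3 := hr3 r
            rw [h3] at e3
            nlinarith
          have hder : 0 < -(r * g4 r) := by nlinarith
          have hslope := (hasDerivAt_iff_tendsto_slope.mp (hd3 r))
          have hev : ∀ᶠ z in nhdsWithin r {r}ᶜ, 0 < slope g3 r z :=
            hslope.eventually (eventually_gt_nhds hder)
          have hmem : Set.Ioo r c ∈ nhdsWithin r (Set.Ioi r) :=
            Ioo_mem_nhdsGT_of_mem ⟨le_refl r, h'⟩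
          have hle : nhdsWithin r (Set.Ioi r) ≤ nhdsWithin r {r}ᶜ :=
            nhdsWithin_mono r (fun z hz => Set.mem_compl_singleton_iff.mpr (ne_of_gt hz))
          obtain ⟨z, hz1, hz2⟩ := (((hev.filter_mono hle).and
            (Filter.eventually_of_mem hmem (fun z hz => hz))).exists)
          have hzr : r < z := hz2.1
          have : 0 < g3 z := by
            have hs : slope g3 r z = g3 z / (z - r) := by
              rw [slope_def_field]; rw [h3]; ring
            rw [hs] at hz1
            have hzr2 : 0 < z - r := by linarith
            have h7 := mul_pos hz1 hzr2
            rwa [div_mul_cancel₀ _ hzr2.ne'] at h7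
          exact hclaim ⟨z, lt_trans h hzr, hz2.2, this⟩
        · exact (hclaim ⟨r, h, h', h3⟩).elim
  -- every zero of g3 in (a,b) is > c
  have h3gtc : ∀ e ∈ Set.Ioo a b, g3 e = 0 → c < e := by
    intro e he h3e
    by_contra hle
    push_neg at hle
    exact absurd h3e (h3ac e he.1 hle).ne
  -- existence of a zero of g3
  have hex3 : ∃ e ∈ Set.Ioo a b, g3 e = 0 := by
    by_contra hno
    push_neg at hno
    have hneg : ∀ z ∈ Set.Ioo a b, g3 z < 0 :=
      all_neg hc3 hno hc h3c
    have h2b : g2 c < g2 b := ggt g2 g3 hd2 hcpos hcb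
      (fun z hz => hneg z ⟨lt_trans hca hz.1, hz.2⟩)
    have e2 := hr2 b
    rw [h1b] at e2
    have h3bpos : 0 < g3 b := by nlinarith
    have h3ble : g3 b ≤ 0 := by
      have htend : Filter.Tendsto g3 (nhdsWithin b (Set.Iio b)) (nhds (g3 b)) :=
        (hc3.continuousAt).continuousWithinAt.tendsto
      apply le_of_tendsto htend
      filter_upwards [Ioo_mem_nhdsLT_of_mem (Set.mem_Ioc.mpr ⟨hab, le_refl b⟩)] with z hz
      exact (hneg z hz).le
    linarith
  obtain ⟨e, he, h3e⟩ := hex3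
  have hce : c < e := h3gtc e he h3e
  -- uniqueness of zeros of g3
  have huniq3 : ∀ z1 ∈ Set.Ioo a b, ∀ z2 ∈ Set.Ioo a b, g3 z1 = 0 → g3 z2 = 0 → z1 = z2 := by
    intro z1 hz1 z2 hz2 h1 h2
    by_contra hne
    have key : ∀ w1 w2 : ℝ, w1 ∈ Set.Ioo a b → w2 ∈ Set.Ioo a b → w1 < w2 →
        g3 w1 = 0 → g3 w2 = 0 → False := by
      intro w1 w2 hw1 hw2 hlt hh1 hh2
      obtain ⟨ξ, hξ, hξ0⟩ := hg3pair w1 w2 (lt_trans ha hw1.1) hlt hh1 hh2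
      have hcw1 : c < w1 := h3gtc w1 hw1 hh1
      have : 0 < g2 ξ := h2cb ξ (le_of_lt (lt_trans hcw1 hξ.1)) (lt_trans hξ.2 hw2.2)
      exact absurd hξ0 this.ne'
    rcases lt_or_gt_of_ne hne with h | h
    · exact key z1 z2 hz1 hz2 h h1 h2
    · exact key z2 z1 hz2 hz1 h h2 h1
  refine ⟨⟨d, ⟨hd, h2d⟩, ?_⟩, ⟨e, ⟨he, h3e⟩, ?_⟩, ?_⟩
  · rintro z ⟨hz, hz2⟩
    exact huniq2 z hz d hd hz2 h2d
  · rintro z ⟨hz, hz3⟩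
    exact huniq3 z hz e he hz3 h3e
  · intro d' e' hd' h2d' he' h3e'
    have hd'c : d' < c := by
      by_contra hge
      push_neg at hge
      exact absurd h2d' (h2cb d' hge hd'.2).ne'
    exact ⟨hd'.1, hd'c, h3gtc e' he' h3e', he'.2⟩

/-- Interlacing of the zeros of `J_{k+2}`, `J_{k+3}` with those of `J_k` between consecutive
zeros of `J_{k+1}`, in the case `c > 2√((k+1)(k+2))`. -/
theorem besselJ_interlacing_large (k : ℝ) (hk : -1 < k) (a b : ℝ)
    (ha : 0 < a) (hab : a < b)
    (hza : besselJ (k + 1) a = 0) (hzb : besselJ (k + 1) b = 0)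
    (hne : ∀ r ∈ Set.Ioo a b, besselJ (k + 1) r ≠ 0)
    (c : ℝ) (hc : c ∈ Set.Ioo a b) (hzc : besselJ k c = 0)
    (hcr : 2 * Real.sqrt ((k + 1) * (k + 2)) < c) :
    (∃! d, d ∈ Set.Ioo a b ∧ besselJ (k + 2) d = 0) ∧
    (∃! e, e ∈ Set.Ioo a b ∧ besselJ (k + 3) e = 0) ∧
    ∀ d e, d ∈ Set.Ioo a b → besselJ (k + 2) d = 0 →
      e ∈ Set.Ioo a b → besselJ (k + 3) e = 0 →
        a < d ∧ d < c ∧ c < e ∧ e < b := by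
  have hcpos : 0 < c := lt_trans ha hc.1
  have hk1 : -1 < k + 1 := by linarith
  have hk2 : -1 < k + 2 := by linarith
  have hk3 : -1 < k + 3 := by linarith
  have hk4 : -1 < k + 4 := by linarith
  -- sign
  set f1 : ℝ → ℝ := fun r => bF (k+1) (r^2) with hf1
  have hbFcont : ∀ j : ℝ, -1 < j → Continuous (fun r : ℝ => bF j (r^2)) := by
    intro j hj
    have h1 : Continuous (bF j) := continuous_iff_continuousAt.mpr
      fun x => (hasDerivAt_bF j hj x).continuousAt
    exact h1.comp (continuous_pow 2)
  have hf1ne : ∀ r ∈ Set.Ioo a b, f1 r ≠ 0 := by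
    intro r hr h0
    apply hne r hr
    rw [besselJ_eq (k+1) r hk1 (lt_trans ha hr.1)]
    have h0' : bF (k+1) (r^2) = 0 := h0
    rw [h0']; ring
  let ε : ℝ := if 0 < f1 c then 1 else -1
  have hεf : ∀ r ∈ Set.Ioo a b, 0 < ε * f1 r := by
    intro r hr
    by_cases hpos : 0 < f1 c
    · have := all_pos (hbFcont (k+1) hk1) hf1ne hc hpos r hr
      simp only [ε, if_pos hpos]; linarith
    · have hneg : f1 c < 0 := lt_of_le_of_ne (not_lt.mp hpos) (hf1ne c hc)
      have := all_neg (hbFcont (k+1) hk1) hf1ne hc hneg r hr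
      simp only [ε, if_neg hpos]; linarith
  have hε : ε = 1 ∨ ε = -1 := by
    by_cases hpos : 0 < f1 c
    · left; simp [ε, if_pos hpos]
    · right; simp [ε, if_neg hpos]
  have hεne : ε ≠ 0 := by rcases hε with h | h <;> rw [h] <;> norm_num
  -- the g functions
  set g0 : ℝ → ℝ := fun r => ε * bF k (r^2) with hg0
  set g1 : ℝ → ℝ := fun r => ε * bF (k+1) (r^2) with hg1
  set g2 : ℝ → ℝ := fun r => ε * bF (k+2) (r^2) with hg2
  set g3 : ℝ → ℝ := fun r => ε * bF (k+3) (r^2) with hg3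
  set g4 : ℝ → ℝ := fun r => ε * bF (k+4) (r^2) with hg4
  have hder : ∀ (j : ℝ), -1 < j → ∀ r : ℝ,
      HasDerivAt (fun s : ℝ => ε * bF j (s^2)) (-(r * (ε * bF (j+1) (r^2)))) r := by
    intro j hj r
    have h1 : HasDerivAt (fun s : ℝ => s^2) (2*r) r := by
      simpa using hasDerivAt_pow 2 r
    have h2 := ((hasDerivAt_bF j hj (r^2)).comp r h1).const_mul ε
    refine h2.congr_deriv ?_
    ring
  have hrecg : ∀ (j : ℝ), 0 < j → ∀ r : ℝ,
      ε * bF (j-1) (r^2) = 2*j * (ε * bF j (r^2)) - r^2 * (ε * bF (j+1) (r^2)) := by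
    intro j hj r
    rw [bF_rec j hj (r^2)]; ring
  have hzero_iff : ∀ (j r : ℝ), -1 < j → 0 < r → (besselJ j r = 0 ↔ ε * bF j (r^2) = 0) := by
    intro j r hj hr
    rw [besselJ_eq j r hj hr]
    have hrj : (0:ℝ) < r ^ j := Real.rpow_pos_of_pos hr j
    constructor
    · intro h
      rcases mul_eq_zero.mp h with h' | h'
      · exact absurd h' hrj.ne'
      · rw [h']; ring
    · intro h
      rcases mul_eq_zero.mp h with h' | h'
      · exact absurd h' hεne
      · rw [h']; ring
  have h1a : g1 a = 0 := (hzero_iff (k+1) a hk1 ha).mp hza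
  have h1b : g1 b = 0 := (hzero_iff (k+1) b hk1 (lt_trans ha hab)).mp hzb
  have h0c : g0 c = 0 := (hzero_iff k c hk hcpos).mp hzc
  have hcr2 : 4*(k+1)*(k+2) < c^2 := by
    have hnn : (0:ℝ) ≤ (k+1)*(k+2) := by nlinarith
    have hs := Real.sq_sqrt hnn
    have hs0 := Real.sqrt_nonneg ((k+1)*(k+2))
    nlinarith
  have hrec1 : ∀ r, g0 r = 2*(k+1) * g1 r - r^2 * g2 r := by
    intro r
    have := hrecg (k+1) (by linarith) r
    simp only [show k+1-1 = k by ring, show k+1+1 = k+2 by ring] at this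
    exact this
  have hrec2 : ∀ r, g1 r = 2*(k+2) * g2 r - r^2 * g3 r := by
    intro r
    have := hrecg (k+2) (by linarith) r
    simp only [show k+2-1 = k+1 by ring, show k+2+1 = k+3 by ring] at this
    exact this
  have hrec3 : ∀ r, g2 r = 2*(k+3) * g3 r - r^2 * g4 r := by
    intro r
    have := hrecg (k+3) (by linarith) r
    simp only [show k+3-1 = k+2 by ring, show k+3+1 = k+4 by ring] at this
    exact this
  have hd0 : ∀ r, HasDerivAt g0 (-(r * g1 r)) r := by
    intro r
    have := hder k hk r
    simpa only [hg0, hg1] using this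
  have hd1 : ∀ r, HasDerivAt g1 (-(r * g2 r)) r := by
    intro r
    have := hder (k+1) hk1 r
    simp only [show k+1+1 = k+2 by ring] at this
    exact this
  have hd2 : ∀ r, HasDerivAt g2 (-(r * g3 r)) r := by
    intro r
    have := hder (k+2) hk2 r
    simp only [show k+2+1 = k+3 by ring] at this
    exact this
  have hd3 : ∀ r, HasDerivAt g3 (-(r * g4 r)) r := by
    intro r
    have := hder (k+3) hk3 r
    simp only [show k+3+1 = k+4 by ring] at this
    exact this
  obtain ⟨hu2, hu3, hord⟩ := key k a b c g0 g1 g2 g3 g4 hk ha hab hd0 hd1 hd2 hd3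
    hrec1 hrec2 hrec3 h1a h1b hεf hc h0c hcr2
  have hiff2 : ∀ r ∈ Set.Ioo a b, (besselJ (k+2) r = 0 ↔ g2 r = 0) :=
    fun r hr => hzero_iff (k+2) r hk2 (lt_trans ha hr.1)
  have hiff3 : ∀ r ∈ Set.Ioo a b, (besselJ (k+3) r = 0 ↔ g3 r = 0) :=
    fun r hr => hzero_iff (k+3) r hk3 (lt_trans ha hr.1)
  refine ⟨?_, ?_, ?_⟩
  · obtain ⟨d, ⟨hd, h2d⟩, huniq⟩ := hu2
    exact ⟨d, ⟨hd, (hiff2 d hd).mpr h2d⟩,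
      fun z ⟨hz, hz2⟩ => huniq z ⟨hz, (hiff2 z hz).mp hz2⟩⟩
  · obtain ⟨e, ⟨he, h3e⟩, huniq⟩ := hu3
    exact ⟨e, ⟨he, (hiff3 e he).mpr h3e⟩,
      fun z ⟨hz, hz3⟩ => huniq z ⟨hz, (hiff3 z hz).mp hz3⟩⟩
  · intro d e hd h2d he h3e
    exact hord d e hd ((hiff2 d hd).mp h2d) he ((hiff3 e he).mp h3e)
end

section
/- Fix a real k > −1 and let a < b be consecutive positive zeros of J_{k+1} with a < 2·√((k+2)(k+3)) < b. Then J_{k+4}(r) ≠ 0 for every r in the open interval (a, b). -/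
open Real

namespace BesselAux

noncomputable def c (ν : ℝ) (m : ℕ) : ℝ :=
  (-1 : ℝ) ^ m / ((4 : ℝ) ^ m * m.factorial * Real.Gamma (m + ν + 1))

noncomputable def F (ν x : ℝ) : ℝ := ∑' m : ℕ, c ν m * x ^ m

lemma arg_pos {ν : ℝ} (hν : -1 < ν) (m : ℕ) : 0 < (m : ℝ) + ν + 1 := by
  have : (0:ℝ) ≤ m := Nat.cast_nonneg m
  linarith

lemma gpos {ν : ℝ} (hν : -1 < ν) (m : ℕ) : 0 < Real.Gamma ((m : ℝ) + ν + 1) :=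
  Real.Gamma_pos_of_pos (arg_pos hν m)

lemma c_succ {ν : ℝ} (hν : -1 < ν) (m : ℕ) :
    c ν (m+1) = -c ν m / (4 * (m+1) * ((m:ℝ) + ν + 1)) := by
  have hα := (arg_pos hν m).ne'
  have hg : Real.Gamma ((m:ℝ) + 1 + ν + 1) = ((m:ℝ)+ν+1) * Real.Gamma ((m:ℝ)+ν+1) := by
    rw [show ((m:ℝ)+1+ν+1) = ((m:ℝ)+ν+1)+1 by ring, Real.Gamma_add_one hα]
  have hγ := (gpos hν m).ne'
  simp only [c, Nat.cast_add, Nat.cast_one, Nat.factorial_succ, Nat.cast_mul, pow_succ]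
  rw [hg]
  have h4 : ((4:ℝ)^m) ≠ 0 := by positivity
  have hf : ((m.factorial : ℝ)) ≠ 0 := by positivity
  have hm1 : ((m:ℝ)+1) ≠ 0 := by positivity
  field_simp


lemma c_rec1 {ν : ℝ} (m : ℕ) :
    ((m:ℝ)+1) * c ν (m+1) = -(1/4) * c (ν+1) m := by
  have e : ((m:ℝ) + 1 + ν + 1) = ((m:ℝ) + (ν+1) + 1) := by ring
  simp only [c, Nat.cast_add, Nat.cast_one, Nat.factorial_succ, Nat.cast_mul, pow_succ, e]
  have hf : ((m.factorial : ℝ)) ≠ 0 := by positivity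
  have hm1 : ((m:ℝ)+1) ≠ 0 := by positivity
  by_cases hγ : Real.Gamma ((m:ℝ) + (ν+1) + 1) = 0
  · simp [hγ]
  · field_simp

lemma c_rec0 {ν : ℝ} (hν : -1 < ν) : c ν 0 = (ν+1) * c (ν+1) 0 := by
  have h1 : (ν:ℝ) + 1 ≠ 0 := by linarith
  have hg : Real.Gamma ((0:ℝ) + (ν+1) + 1) = (ν+1) * Real.Gamma ((0:ℝ)+ν+1) := by
    rw [show ((0:ℝ)+(ν+1)+1) = ((0:ℝ)+ν+1)+1 by ring, Real.Gamma_add_one (by push_cast; linarith)]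
    ring_nf
  have hγ := (gpos hν 0).ne'
  simp only [c, Nat.cast_zero] at hg ⊢
  rw [hg]
  have hγ' : Real.Gamma (ν+1) ≠ 0 := by simpa using hγ
  field_simp

lemma c_rec2 {ν : ℝ} (hν : -1 < ν) (m : ℕ) :
    c ν (m+1) = (ν+1) * c (ν+1) (m+1) - (1/4) * c (ν+2) m := by
  have hβ : (0:ℝ) < (m:ℝ) + ν + 2 := by have := arg_pos hν m; linarith
  have hg : Real.Gamma ((m:ℝ) + ν + 3) = ((m:ℝ)+ν+2) * Real.Gamma ((m:ℝ)+ν+2) := by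
    rw [show ((m:ℝ)+ν+3) = ((m:ℝ)+ν+2)+1 by ring, Real.Gamma_add_one hβ.ne']
  have hγ2 : Real.Gamma ((m:ℝ)+ν+2) ≠ 0 := (Real.Gamma_pos_of_pos hβ).ne'
  have e1 : ((m:ℝ) + 1 + ν + 1) = ((m:ℝ) + ν + 2) := by ring
  have e2 : ((m:ℝ) + 1 + (ν+1) + 1) = ((m:ℝ) + ν + 3) := by ring
  have e3 : ((m:ℝ) + (ν+2) + 1) = ((m:ℝ) + ν + 3) := by ring
  simp only [c, Nat.cast_add, Nat.cast_one, Nat.factorial_succ, Nat.cast_mul, pow_succ, e1, e2, e3]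
  rw [hg]
  have hf : ((m.factorial : ℝ)) ≠ 0 := by positivity
  have hm1 : ((m:ℝ)+1) ≠ 0 := by positivity
  have h4 : ((4:ℝ)^m) ≠ 0 := by positivity
  field_simp
  ring

lemma abs_c_succ {ν : ℝ} (hν : -1 < ν) (m : ℕ) :
    |c ν (m+1)| = |c ν m| / (4 * (m+1) * ((m:ℝ) + ν + 1)) := by
  rw [c_succ hν m, abs_div, abs_neg]
  congr 1
  exact abs_of_pos (by have := arg_pos hν m; positivity)

lemma summable_abs {ν : ℝ} (hν : -1 < ν) (t : ℝ) :
    Summable (fun m : ℕ => |c ν m| * |t| ^ m) := by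
  apply summable_of_ratio_norm_eventually_le (r := 1/2) (by norm_num)
  have : ∀ᶠ m : ℕ in Filter.atTop, (|t| : ℝ) ≤ 2 * ((m:ℝ)+1) ∧ (1:ℝ) ≤ (m:ℝ) + ν + 1 := by
    filter_upwards [Filter.eventually_ge_atTop (Nat.ceil (|t| + |ν|))] with m hm
    have h1 : (|t| + |ν| : ℝ) ≤ m := le_trans (Nat.le_ceil _) (by exact_mod_cast hm)
    have h2 : |ν| ≥ -ν := neg_le_abs ν
    have h3 : (0:ℝ) ≤ |t| := abs_nonneg t
    have h4 : (0:ℝ) ≤ |ν| := abs_nonneg ν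
    constructor <;> nlinarith
  filter_upwards [this] with m ⟨h1, h2⟩
  have hden : (0:ℝ) < 4 * ((m:ℝ)+1) * ((m:ℝ) + ν + 1) := by
    have := arg_pos hν m; positivity
  simp only [Real.norm_eq_abs, abs_mul, abs_abs, abs_pow]
  rw [abs_c_succ hν m, pow_succ, div_mul_eq_mul_div, div_le_iff₀ hden]
  have hc : (0:ℝ) ≤ |c ν m| := abs_nonneg _
  have hp : (0:ℝ) ≤ |t| ^ m := by positivity
  calc |c ν m| * (|t| ^ m * |t|) = |c ν m| * |t| ^ m * |t| := by ring
    _ ≤ |c ν m| * |t| ^ m * (2 * ((m:ℝ)+1)) := by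
        apply mul_le_mul_of_nonneg_left h1 (by positivity)
    _ ≤ 1/2 * (|c ν m| * |t| ^ m) * (4 * ((m:ℝ)+1) * ((m:ℝ)+ν+1)) := by
        nlinarith [mul_nonneg hc hp, mul_nonneg (mul_nonneg hc hp) (by positivity : (0:ℝ) ≤ (m:ℝ)+1)]

lemma summable_main {ν : ℝ} (hν : -1 < ν) (y : ℝ) :
    Summable (fun m : ℕ => c ν m * y ^ m) := by
  apply Summable.of_norm
  apply (summable_abs hν y).of_nonneg_of_le (fun m => norm_nonneg _)
  intro m
  rw [norm_mul, norm_pow]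
  exact le_of_eq rfl


lemma hasDerivAt_F {ν : ℝ} (hν : -1 < ν) (x : ℝ) :
    HasDerivAt (F ν) (-F (ν+1) x / 4) x := by
  have hν1 : -1 < ν + 1 := by linarith
  set R : ℝ := |x| + 1 with hR
  have hR0 : (0:ℝ) < R := by positivity
  set u : ℕ → ℝ := fun n => |c ν n| * (n * R^(n-1)) with hu
  have huterm : ∀ m : ℕ, u (m+1) = (1/4) * (|c (ν+1) m| * |R| ^ m) := by
    intro m
    have h1 := c_rec1 (ν := ν) (m := m)
    have h2 : |((m:ℝ)+1) * c ν (m+1)| = (1/4) * |c (ν+1) m| := by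
      rw [h1, abs_mul]; norm_num
    rw [abs_mul, abs_of_nonneg (by positivity : (0:ℝ) ≤ (m:ℝ)+1)] at h2
    simp only [hu, Nat.add_sub_cancel, Nat.cast_add, Nat.cast_one,
      abs_of_pos hR0]
    calc |c ν (m+1)| * (((m:ℝ)+1) * R ^ m) = (((m:ℝ)+1) * |c ν (m+1)|) * R ^ m := by ring
      _ = (1/4) * (|c (ν+1) m| * R ^ m) := by rw [h2]; ring
  have husum : Summable u := by
    rw [← summable_nat_add_iff 1]
    simp only [huterm]
    exact (summable_abs hν1 R).mul_left _
  have hg : ∀ n : ℕ, ∀ y : ℝ, y ∈ Set.Ioo (-R) R →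
      HasDerivAt (fun z : ℝ => c ν n * z^n) (c ν n * (n * y^(n-1))) y :=
    fun n y _ => (hasDerivAt_pow n y).const_mul _
  have hbound : ∀ n : ℕ, ∀ y : ℝ, y ∈ Set.Ioo (-R) R → ‖c ν n * (n * y^(n-1))‖ ≤ u n := by
    intro n y hy
    have hyR : |y| ≤ R := le_of_lt (abs_lt.2 ⟨hy.1, hy.2⟩)
    rw [Real.norm_eq_abs, abs_mul, abs_mul, abs_pow, abs_of_nonneg (Nat.cast_nonneg n : (0:ℝ) ≤ n)]
    apply mul_le_mul_of_nonneg_left _ (abs_nonneg _)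
    exact mul_le_mul_of_nonneg_left (pow_le_pow_left₀ (abs_nonneg y) hyR _) (Nat.cast_nonneg n)
  have hxmem : x ∈ Set.Ioo (-R) R := by
    constructor
    · have := neg_abs_le x; simp only [hR]; linarith
    · have := le_abs_self x; simp only [hR]; linarith
  have H := hasDerivAt_tsum_of_isPreconnected husum isOpen_Ioo
    (convex_Ioo (-R) R).isPreconnected hg hbound hxmem (summable_main hν x) hxmem
  have hs : Summable (fun n : ℕ => c ν n * ((n:ℝ) * x^(n-1))) := by
    rw [← summable_nat_add_iff 1]
    have : (fun m : ℕ => c ν (m+1) * ((((m+1):ℕ):ℝ) * x^((m+1)-1)))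
        = fun m : ℕ => (-(1/4)) * (c (ν+1) m * x ^ m) := by
      ext m
      have h1 := c_rec1 (ν := ν) (m := m)
      simp only [Nat.add_sub_cancel, Nat.cast_add, Nat.cast_one]
      calc c ν (m+1) * (((m:ℝ)+1) * x^m) = (((m:ℝ)+1) * c ν (m+1)) * x^m := by ring
        _ = (-(1/4)) * (c (ν+1) m * x ^ m) := by rw [h1]; ring
    rw [this]
    exact (summable_main hν1 x).mul_left _
  have hsum_eq : (∑' n : ℕ, c ν n * ((n:ℝ) * x^(n-1))) = -F (ν+1) x / 4 := by
    rw [Summable.tsum_eq_zero_add hs]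
    simp only [Nat.cast_zero, zero_mul, mul_zero, zero_add, Nat.add_sub_cancel,
      Nat.cast_add, Nat.cast_one]
    have : (fun m : ℕ => c ν (m+1) * (((m:ℝ)+1) * x^m))
        = fun m : ℕ => (-(1/4)) * (c (ν+1) m * x ^ m) := by
      ext m
      have h1 := c_rec1 (ν := ν) (m := m)
      calc c ν (m+1) * (((m:ℝ)+1) * x^m) = (((m:ℝ)+1) * c ν (m+1)) * x^m := by ring
        _ = (-(1/4)) * (c (ν+1) m * x ^ m) := by rw [h1]; ring
    rw [this, tsum_mul_left]
    simp only [F]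
    ring
  rw [hsum_eq] at H
  exact H

lemma F_rec {ν : ℝ} (hν : -1 < ν) (x : ℝ) :
    F ν x = (ν+1) * F (ν+1) x - x/4 * F (ν+2) x := by
  have hν1 : -1 < ν + 1 := by linarith
  have hν2 : -1 < ν + 2 := by linarith
  have s0 := summable_main hν x
  have s1 := summable_main hν1 x
  have s2 := summable_main hν2 x
  have key : F ν x - (ν+1) * F (ν+1) x = - (x/4) * F (ν+2) x := by
    have hdiff : F ν x - (ν+1) * F (ν+1) x
        = ∑' m : ℕ, (c ν m * x ^ m - (ν+1) * (c (ν+1) m * x ^ m)) := by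
      rw [Summable.tsum_sub s0 (s1.mul_left _), tsum_mul_left]
      simp [F]
    rw [hdiff]
    have hsd : Summable (fun m : ℕ => c ν m * x ^ m - (ν+1) * (c (ν+1) m * x ^ m)) :=
      s0.sub (s1.mul_left _)
    rw [Summable.tsum_eq_zero_add hsd]
    have hz : c ν 0 * x ^ 0 - (ν+1) * (c (ν+1) 0 * x ^ 0) = 0 := by
      rw [c_rec0 hν]; ring
    rw [hz, zero_add]
    have : (fun m : ℕ => c ν (m+1) * x ^ (m+1) - (ν+1) * (c (ν+1) (m+1) * x ^ (m+1)))
        = fun m : ℕ => (-(x/4)) * (c (ν+2) m * x ^ m) := by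
      ext m
      rw [c_rec2 hν m]
      rw [pow_succ]
      ring
    rw [this, tsum_mul_left]
    simp only [F]
  linarith [key]

lemma hasDerivAt_weight {ν : ℝ} (hν : -1 < ν) {x : ℝ} (hx : 0 < x) :
    HasDerivAt (fun y : ℝ => y ^ (ν+1) * F (ν+1) y) (x ^ ν * F ν x) x := by
  have h1 : HasDerivAt (fun y : ℝ => y ^ (ν+1)) ((ν+1) * x ^ ν) x := by
    have := Real.hasDerivAt_rpow_const (x := x) (p := ν+1) (Or.inl hx.ne')
    simpa [add_sub_cancel_right] using this
  have h2 := hasDerivAt_F (by linarith : -1 < ν+1) x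
  have h3 := h1.mul h2
  refine h3.congr_deriv ?_
  rw [F_rec hν x, Real.rpow_add_one hx.ne' ν]
  ring

lemma weight_mono {ν : ℝ} (hν : -1 < ν) (w : ℝ) {u v : ℝ} (hu : 0 < u)
    (hsign : ∀ x ∈ Set.Ioo u v, 0 < w * F ν x) :
    StrictMonoOn (fun x : ℝ => x ^ (ν+1) * (w * F (ν+1) x)) (Set.Icc u v) := by
  have hder : ∀ x : ℝ, 0 < x →
      HasDerivAt (fun y : ℝ => y ^ (ν+1) * (w * F (ν+1) y)) (x ^ ν * (w * F ν x)) x := by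
    intro x hx
    have := (hasDerivAt_weight hν hx).const_mul w
    have he : (fun y : ℝ => w * (y ^ (ν+1) * F (ν+1) y))
        = fun y : ℝ => y ^ (ν+1) * (w * F (ν+1) y) := by ext y; ring
    rw [he] at this
    refine this.congr_deriv ?_
    ring
  apply strictMonoOn_of_deriv_pos (convex_Icc u v)
  · intro x hx
    exact ((hder x (lt_of_lt_of_le hu hx.1)).continuousAt).continuousWithinAt
  · intro x hx
    rw [interior_Icc] at hx
    have hx0 : 0 < x := lt_trans hu hx.1
    rw [(hder x hx0).deriv]
    exact mul_pos (Real.rpow_pos_of_pos hx0 ν) (hsign x hx)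

lemma weight_anti {ν : ℝ} (hν : -1 < ν) (w : ℝ) {u v : ℝ} (hu : 0 < u)
    (hsign : ∀ x ∈ Set.Ioo u v, w * F ν x < 0) :
    StrictAntiOn (fun x : ℝ => x ^ (ν+1) * (w * F (ν+1) x)) (Set.Icc u v) := by
  have := weight_mono hν (-w) hu (u := u) (v := v) (by intro x hx; have := hsign x hx; nlinarith)
  intro x hx y hy hxy
  have h2 := this hx hy hxy
  simp only at h2 ⊢
  nlinarith [h2]

lemma star {k : ℝ} (hk : -1 < k) (x : ℝ) :
    x^2 * F (k+4) x = 4*(4*(k+2)*(k+3) - x) * F (k+2) x - 16*(k+3)*F (k+1) x := by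
  have h1 := F_rec (show -1 < k+1 by linarith) x
  have h2 := F_rec (show -1 < k+2 by linarith) x
  rw [show (k+1)+1 = k+2 from by ring, show (k+1)+2 = k+3 from by ring] at h1
  rw [show (k+2)+1 = k+3 from by ring, show (k+2)+2 = k+4 from by ring] at h2
  linear_combination (16*(k+3)) * h1 + (4*x) * h2

lemma besselJ_eq (ν : ℝ) {r : ℝ} (hr : 0 < r) :
    besselJ ν r = (r/2) ^ ν * F ν (r^2) := by
  have h2 : (0:ℝ) < r/2 := by linarith
  rw [besselJ, F, ← tsum_mul_left]
  apply tsum_congr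
  intro m
  have e1 : ((2 * m : ℝ) + ν) = ((2*m : ℕ) : ℝ) + ν := by push_cast; ring
  have e2 : (r/2) ^ ((2 * m : ℝ) + ν) = (r/2) ^ ν * ((r^2/4) ^ m) := by
    rw [e1, Real.rpow_add h2, Real.rpow_natCast, mul_comm]
    congr 1
    rw [pow_mul]
    norm_num
    rw [div_pow]
    norm_num
  rw [e2, c]
  have h4 : ((4:ℝ)^m) ≠ 0 := by positivity
  rw [div_pow]
  ring

lemma pos_factor {X Y : ℝ} (hX : 0 < X) (hXY : 0 < X * Y) : 0 < Y := by
  by_contra h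
  push_neg at h
  nlinarith

lemma neg_factor {X Y : ℝ} (hX : 0 < X) (hXY : X * Y < 0) : Y < 0 := by
  by_contra h
  push_neg at h
  nlinarith

lemma besselJ_zero_iff (ν : ℝ) {r : ℝ} (hr : 0 < r) :
    besselJ ν r = 0 ↔ F ν (r^2) = 0 := by
  rw [besselJ_eq ν hr]
  have : (0:ℝ) < (r/2) ^ ν := Real.rpow_pos_of_pos (by linarith) ν
  constructor
  · intro h
    rcases mul_eq_zero.1 h with h' | h'
    · exact absurd h' this.ne'
    · exact h'
  · intro h; rw [h, mul_zero]
end BesselAux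

set_option maxHeartbeats 1000000 in
open BesselAux in
/-- If the point `2√((k+2)(k+3))` lies strictly between consecutive zeros `a < b` of `J_{k+1}`,
then `J_{k+4}` has no zero in `(a, b)`. -/
theorem besselJ_add_four_no_zero (k : ℝ) (hk : -1 < k) (a b : ℝ)
    (ha : 0 < a) (hab : a < b)
    (hza : besselJ (k + 1) a = 0) (hzb : besselJ (k + 1) b = 0)
    (hne : ∀ r ∈ Set.Ioo a b, besselJ (k + 1) r ≠ 0)
    (hA : a < 2 * Real.sqrt ((k + 2) * (k + 3)))
    (hB : 2 * Real.sqrt ((k + 2) * (k + 3)) < b) :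
    ∀ r ∈ Set.Ioo a b, besselJ (k + 4) r ≠ 0 := by
  have hk1 : -1 < k + 1 := by linarith
  have hk2 : -1 < k + 2 := by linarith
  have hk3 : -1 < k + 3 := by linarith
  have hk2' : (0:ℝ) < k + 2 := by linarith
  have hk3' : (0:ℝ) < k + 3 := by linarith
  have hb0 : 0 < b := lt_trans ha hab
  obtain ⟨γ, hγdef⟩ : ∃ t : ℝ, t = 4*(k+2)*(k+3) := ⟨_, rfl⟩
  have hγ0 : 0 < γ := by rw [hγdef]; positivity
  have hcsq : (2 * Real.sqrt ((k + 2) * (k + 3)))^2 = γ := by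
    rw [hγdef, mul_pow, Real.sq_sqrt (by positivity : (0:ℝ) ≤ (k+2)*(k+3))]
    ring
  have hA2 : a^2 < γ := by
    rw [← hcsq]
    have h0 : 0 ≤ 2 * Real.sqrt ((k + 2) * (k + 3)) := by positivity
    nlinarith
  have hB2 : γ < b^2 := by
    rw [← hcsq]
    have h0 : 0 ≤ 2 * Real.sqrt ((k + 2) * (k + 3)) := by positivity
    nlinarith
  have ha2 : (0:ℝ) < a^2 := by positivity
  -- F (k+1) nonzero on (a², b²)
  have hFne : ∀ x ∈ Set.Ioo (a^2) (b^2), F (k+1) x ≠ 0 := by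
    intro x hx
    have hx0 : 0 < x := lt_trans ha2 hx.1
    have hs1 : a < Real.sqrt x := by
      have := Real.sqrt_lt_sqrt (sq_nonneg a) hx.1
      rwa [Real.sqrt_sq ha.le] at this
    have hs2 : Real.sqrt x < b := by
      have := Real.sqrt_lt_sqrt hx0.le hx.2
      rwa [Real.sqrt_sq hb0.le] at this
    have hsp : 0 < Real.sqrt x := lt_trans ha hs1
    have h := hne _ ⟨hs1, hs2⟩
    intro hF
    exact h ((besselJ_zero_iff (k+1) hsp).2 (by rwa [Real.sq_sqrt hx0.le]))
  have hcF : Continuous (F (k+1)) := by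
    rw [continuous_iff_continuousAt]
    exact fun x => (hasDerivAt_F hk1 x).continuousAt
  have hγmem : γ ∈ Set.Ioo (a^2) (b^2) := ⟨hA2, hB2⟩
  obtain ⟨w, hwdef⟩ : ∃ t : ℝ, t = F (k+1) γ := ⟨_, rfl⟩
  have hwne : w ≠ 0 := hwdef ▸ hFne γ hγmem
  -- sign constancy
  have hw : ∀ x ∈ Set.Ioo (a^2) (b^2), 0 < w * F (k+1) x := by
    have key : ∀ p q : ℝ, p ∈ Set.Ioo (a^2) (b^2) → q ∈ Set.Ioo (a^2) (b^2) → p ≤ q →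
        0 < F (k+1) p * F (k+1) q := by
      intro p q hp hq hpq
      by_contra hle
      push_neg at hle
      have hzero : ∃ z ∈ Set.Icc p q, F (k+1) z = 0 := by
        rcases mul_nonpos_iff.1 hle with ⟨h1, h2⟩ | ⟨h1, h2⟩
        · have : (0:ℝ) ∈ Set.Icc (F (k+1) q) (F (k+1) p) := ⟨h2, h1⟩
          have him := intermediate_value_Icc' hpq (hcF.continuousOn) this
          rcases him with ⟨z, hz, hz0⟩
          exact ⟨z, hz, hz0⟩
        · have : (0:ℝ) ∈ Set.Icc (F (k+1) p) (F (k+1) q) := ⟨h1, h2⟩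
          have him := intermediate_value_Icc hpq (hcF.continuousOn) this
          rcases him with ⟨z, hz, hz0⟩
          exact ⟨z, hz, hz0⟩
      rcases hzero with ⟨z, hz, hz0⟩
      exact hFne z ⟨lt_of_lt_of_le hp.1 hz.1, lt_of_le_of_lt hz.2 hq.2⟩ hz0
    intro x hx
    rcases le_total x γ with h | h
    · have := key x γ hx hγmem h
      rw [hwdef]; nlinarith
    · have := key γ x hγmem hx h
      rw [hwdef]; nlinarith
  -- the star facts at γ
  have hwF1γ : 0 < w * F (k+1) γ := hw γ hγmem
  have hSγ := star hk γ
  have h0γ : 4*(k+2)*(k+3) - γ = 0 := by rw [hγdef]; ring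
  have hSγ' : γ^2 * (w * F (k+4) γ) = -16*((k+3)*(w * F (k+1) γ)) := by
    linear_combination w * hSγ + 4 * w * F (k+2) γ * h0γ
  have hwF4γ : w * F (k+4) γ < 0 := by
    by_contra hge
    push_neg at hge
    nlinarith [mul_pos hk3' hwF1γ, mul_nonneg (sq_nonneg γ) hge]
  -- main argument
  intro r hr hcon
  have hr0 : 0 < r := lt_trans ha hr.1
  obtain ⟨x₀, hx₀def⟩ : ∃ t : ℝ, t = r^2 := ⟨_, rfl⟩
  have hx₀0 : 0 < x₀ := by rw [hx₀def]; positivity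
  have hx₀mem : x₀ ∈ Set.Ioo (a^2) (b^2) := by
    constructor
    · rw [hx₀def]; nlinarith [hr.1]
    · rw [hx₀def]; nlinarith [hr.2]
  have hF4 : F (k+4) x₀ = 0 := by
    rw [hx₀def]; exact (besselJ_zero_iff (k+4) hr0).1 hcon
  have hS₀ := star hk x₀
  rw [hF4] at hS₀
  rw [← hγdef] at hS₀
  have hwF1x₀ : 0 < w * F (k+1) x₀ := hw x₀ hx₀mem
  have hS₀' : 4*(γ - x₀)*(w * F (k+2) x₀) = 16*((k+3)*(w * F (k+1) x₀)) := by
    linear_combination -w * hS₀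
  rcases lt_trichotomy x₀ γ with hlt | heq | hgt
  · -- x₀ < γ
    have hwF2x₀ : 0 < w * F (k+2) x₀ :=
      pos_factor (by linarith : (0:ℝ) < 4*(γ - x₀)) (by rw [hS₀']; positivity)
    -- g strict mono on [x₀, γ]
    have hg := weight_mono hk1 w hx₀0 (v := γ)
      (fun x hx => hw x ⟨lt_trans hx₀mem.1 hx.1, lt_trans hx.2 hγmem.2⟩)
    rw [show (k+1)+1 = k+2 from by ring] at hg
    have hF2pos : ∀ x ∈ Set.Icc x₀ γ, 0 < w * F (k+2) x := by
      intro x hx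
      rcases eq_or_lt_of_le hx.1 with he | hlt'
      · rw [← he]; exact hwF2x₀
      · have h1 := hg (Set.left_mem_Icc.2 (le_of_lt hlt)) hx hlt'
        have h2 : 0 < x₀ ^ (k+2) * (w * F (k+2) x₀) :=
          mul_pos (Real.rpow_pos_of_pos hx₀0 _) hwF2x₀
        have hx0 : 0 < x := lt_trans hx₀0 hlt'
        exact pos_factor (Real.rpow_pos_of_pos hx0 (k+2)) (lt_trans h2 h1)
    -- F (k+3) at x₀
    have hrec2 := F_rec hk2 x₀
    rw [show (k+2)+1 = k+3 from by ring, show (k+2)+2 = k+4 from by ring, hF4] at hrec2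
    have hwrec2 : w * F (k+2) x₀ = (k+3) * (w * F (k+3) x₀) := by
      linear_combination w * hrec2
    have hwF3x₀ : 0 < w * F (k+3) x₀ :=
      pos_factor hk3' (by rw [← hwrec2]; exact hwF2x₀)
    have hp := weight_mono hk2 w hx₀0 (v := γ) (fun x hx => hF2pos x ⟨hx.1.le, hx.2.le⟩)
    rw [show (k+2)+1 = k+3 from by ring] at hp
    have hF3pos : ∀ x ∈ Set.Icc x₀ γ, 0 < w * F (k+3) x := by
      intro x hx
      rcases eq_or_lt_of_le hx.1 with he | hlt'
      · rw [← he]; exact hwF3x₀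
      · have h1 := hp (Set.left_mem_Icc.2 (le_of_lt hlt)) hx hlt'
        have h2 : 0 < x₀ ^ (k+3) * (w * F (k+3) x₀) :=
          mul_pos (Real.rpow_pos_of_pos hx₀0 _) hwF3x₀
        have hx0 : 0 < x := lt_trans hx₀0 hlt'
        exact pos_factor (Real.rpow_pos_of_pos hx0 (k+3)) (lt_trans h2 h1)
    have hh := weight_mono hk3 w hx₀0 (v := γ) (fun x hx => hF3pos x ⟨hx.1.le, hx.2.le⟩)
    rw [show (k+3)+1 = k+4 from by ring] at hh
    have h1 := hh (Set.left_mem_Icc.2 (le_of_lt hlt)) (Set.right_mem_Icc.2 (le_of_lt hlt)) hlt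
    simp only at h1
    rw [hF4, mul_zero, mul_zero] at h1
    have hγp : 0 < γ ^ (k+4) := Real.rpow_pos_of_pos hγ0 _
    have := pos_factor hγp h1
    linarith
  · -- x₀ = γ
    rw [heq] at hF4
    rw [hF4, mul_zero] at hwF4γ
    exact lt_irrefl 0 hwF4γ
  · -- γ < x₀
    have hwF2x₀ : w * F (k+2) x₀ < 0 := by
      have hneg : (4*(γ - x₀)) * (w * F (k+2) x₀) > 0 := by
        rw [hS₀']; positivity
      by_contra hge
      push_neg at hge
      nlinarith
    have hg := weight_mono hk1 w hγ0 (v := x₀)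
      (fun x hx => hw x ⟨lt_trans hγmem.1 hx.1, lt_trans hx.2 hx₀mem.2⟩)
    rw [show (k+1)+1 = k+2 from by ring] at hg
    have hF2neg : ∀ x ∈ Set.Icc γ x₀, w * F (k+2) x < 0 := by
      intro x hx
      rcases eq_or_lt_of_le hx.2 with he | hlt'
      · rw [he]; exact hwF2x₀
      · have h1 := hg hx (Set.right_mem_Icc.2 (le_of_lt hgt)) hlt'
        have h2 : x₀ ^ (k+2) * (w * F (k+2) x₀) < 0 :=
          mul_neg_of_pos_of_neg (Real.rpow_pos_of_pos hx₀0 (k+2)) hwF2x₀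
        have hx0 : 0 < x := lt_of_lt_of_le hγ0 hx.1
        exact neg_factor (Real.rpow_pos_of_pos hx0 (k+2)) (lt_trans h1 h2)
    have hF3neg : ∀ x ∈ Set.Icc γ x₀, w * F (k+3) x < 0 := by
      intro x hx
      have hx0 : 0 < x := lt_of_lt_of_le hγ0 hx.1
      have hrec1 := F_rec hk1 x
      rw [show (k+1)+1 = k+2 from by ring, show (k+1)+2 = k+3 from by ring] at hrec1
      have hxmem : x ∈ Set.Ioo (a^2) (b^2) :=
        ⟨lt_of_lt_of_le hγmem.1 hx.1, lt_of_le_of_lt hx.2 hx₀mem.2⟩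
      have h1 := hw x hxmem
      have h2 := hF2neg x hx
      have hwrec1 : (x/4) * (w * F (k+3) x) = (k+2)*(w * F (k+2) x) - w * F (k+1) x := by
        linear_combination w * hrec1
      have hneg : (x/4) * (w * F (k+3) x) < 0 := by
        rw [hwrec1]
        nlinarith [mul_pos hk2' h1]
      exact neg_factor (by linarith : (0:ℝ) < x/4) hneg
    have hh := weight_anti hk3 w hγ0 (v := x₀) (fun x hx => hF3neg x ⟨hx.1.le, hx.2.le⟩)
    rw [show (k+3)+1 = k+4 from by ring] at hh
    have h1 := hh (Set.left_mem_Icc.2 (le_of_lt hgt)) (Set.right_mem_Icc.2 (le_of_lt hgt)) hgt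
    simp only at h1
    rw [hF4, mul_zero, mul_zero] at h1
    have hγp : 0 < γ ^ (k+4) := Real.rpow_pos_of_pos hγ0 _
    have := pos_factor hγp h1
    linarith
end
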